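/- arXiv:2105.03722 — 9 statements merged into one kernel-verified Lean document; each statement's English description precedes it below -/
import Mathlib

section
/- The subspace 𝔥 spanned by the derivations Dⁱ(0) = tᵢ ∂/∂tᵢ for 1 ≤ i ≤ n is a maximal abelian subalgebra of the Witt algebra Der A. -/
/-- The Laurent polynomial algebra `A = ℂ[t₁^{±1},...,tₙ^{±1}]`. -/
abbrev LaurentAlg (n : ℕ) := AddMonoidAlgebra ℂ (Fin n → ℤ)

/-- The monomial `t^s` in `A`. -/
noncomputable def tmon {n : ℕ} (s : Fin n → ℤ) : LaurentAlg n := AddMonoidAlgebra.single s 1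

/-- Two derivations agreeing on all monomials are equal. -/
lemma derivation_ext_tmon {n : ℕ} {X Y : Derivation ℂ (LaurentAlg n) (LaurentAlg n)}
    (h : ∀ s, X (tmon s) = Y (tmon s)) : X = Y := by
  have hl : X.toLinearMap = Y.toLinearMap := by
    apply AddMonoidAlgebra.lhom_ext'
    intro a; apply LinearMap.ext; intro b
    have hb : (AddMonoidAlgebra.lsingle (R := ℂ) a b : LaurentAlg n) = b • tmon a := by
      simp [tmon, AddMonoidAlgebra.smul_single']
    rw [LinearMap.comp_apply, LinearMap.comp_apply, hb]
    show X (b • tmon a) = Y (b • tmon a)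
    rw [Derivation.map_smul, Derivation.map_smul, h]
  apply Derivation.ext; intro x
  exact DFunLike.congr_fun hl x

/-- Coefficient formula for the Euler derivation `tᵢ ∂/∂tᵢ`. -/
lemma eval_coeff {n : ℕ} (X : Derivation ℂ (LaurentAlg n) (LaurentAlg n)) (i : Fin n)
    (hX : ∀ r, X (tmon r) = (r i : ℂ) • tmon r) (f : LaurentAlg n) (r0 : Fin n → ℤ) :
    (X f).coeff r0 = (r0 i : ℂ) * f.coeff r0 := by
  have hf : f = ∑ r ∈ f.coeff.support, (f.coeff r) • tmon r := by
    conv_lhs => rw [← AddMonoidAlgebra.sum_coeff_single f]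
    rw [Finsupp.sum]
    refine Finset.sum_congr rfl fun r _ => ?_
    simp [tmon, AddMonoidAlgebra.smul_single']
  calc (X f).coeff r0 = (X (∑ r ∈ f.coeff.support, (f.coeff r) • tmon r)).coeff r0 := by rw [← hf]
    _ = (∑ r ∈ f.coeff.support, (f.coeff r) • ((r i : ℂ) • tmon r)).coeff r0 := by
        rw [map_sum]
        simp only [Derivation.map_smul, hX]
    _ = ∑ r ∈ f.coeff.support, (f.coeff r * (r i : ℂ)) * (tmon r).coeff r0 := by
        rw [AddMonoidAlgebra.coeff_sum, Finsupp.finset_sum_apply]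
        refine Finset.sum_congr rfl fun r _ => ?_
        rw [smul_smul]
        rfl
    _ = (r0 i : ℂ) * f.coeff r0 := by
        rw [Finset.sum_eq_single r0]
        · by_cases h : r0 ∈ f.coeff.support
          · simp [tmon]; ring
          · simp [Finsupp.notMem_support_iff.mp h]
        · intro r hr hne
          simp [tmon, Finsupp.single_apply, hne]
        · intro h
          simp [Finsupp.notMem_support_iff.mp h]

/-- A simultaneous eigenvector of all Euler derivations with eigenvalue `s` is a
multiple of `t^s`. -/
lemma eigen {n : ℕ} (f : LaurentAlg n) (s : Fin n → ℤ)
    (h : ∀ (i : Fin n) (r : Fin n → ℤ), (r i : ℂ) * f.coeff r = (s i : ℂ) * f.coeff r) :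
    f = (f.coeff s) • tmon s := by
  ext r
  by_cases hr : r = s
  · subst hr
    simp [tmon, Finsupp.smul_apply, Finsupp.single_apply]
  · have hex : ∃ i, r i ≠ s i := by
      by_contra hc; push_neg at hc; exact hr (funext hc)
    obtain ⟨i, hi⟩ := hex
    have h2 := h i r
    have hf : f.coeff r = 0 := by
      by_contra hf
      exact hi (by exact_mod_cast mul_right_cancel₀ hf h2)
    simp [hf, tmon, Finsupp.smul_apply, Finsupp.single_apply, Ne.symm hr]

lemma deriv_sum_apply {n : ℕ} {ι : Type} (t : Finset ι)
    (g : ι → Derivation ℂ (LaurentAlg n) (LaurentAlg n)) (a : LaurentAlg n) :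
    (∑ i ∈ t, g i) a = ∑ i ∈ t, g i a := by
  induction t using Finset.cons_induction with
  | empty => simp
  | cons i t hi ih => simp [Finset.sum_cons, ih]

/-- the span `𝔥` of the derivations `Dⁱ(0) = tᵢ ∂/∂tᵢ = D(eᵢ, 0)`
is a maximal abelian subalgebra of the Witt algebra `Der A`: it is abelian, and any
abelian Lie subalgebra of `Der A` containing it equals it. -/
theorem cartan_maximal_abelian (n : ℕ)
    (D : (Fin n → ℂ) → (Fin n → ℤ) → Derivation ℂ (LaurentAlg n) (LaurentAlg n))
    (hD : ∀ (u : Fin n → ℂ) (r s : Fin n → ℤ),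
      D u r (tmon s) = (∑ i, u i * (s i : ℂ)) • tmon (r + s))
    (𝔥 : Submodule ℂ (Derivation ℂ (LaurentAlg n) (LaurentAlg n)))
    (h𝔥 : 𝔥 = Submodule.span ℂ (Set.range fun i : Fin n => D (Pi.single i 1) 0)) :
    (∀ x ∈ 𝔥, ∀ y ∈ 𝔥, ⁅x, y⁆ = 0) ∧
      ∀ K : LieSubalgebra ℂ (Derivation ℂ (LaurentAlg n) (LaurentAlg n)),
        (∀ x ∈ K, ∀ y ∈ K, ⁅x, y⁆ = 0) → 𝔥 ≤ K.toSubmodule → K.toSubmodule = 𝔥 := by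
  subst h𝔥
  -- the action of the generators on monomials
  have hgen : ∀ (i : Fin n) (s : Fin n → ℤ),
      D (Pi.single i 1) 0 (tmon s) = (s i : ℂ) • tmon s := by
    intro i s
    rw [hD, zero_add]
    congr 1
    rw [Finset.sum_eq_single i]
    · simp
    · intro j _ hj; simp [Pi.single_apply, hj]
    · simp
  -- every element of the span acts diagonally on monomials
  have P : ∀ x ∈ Submodule.span ℂ (Set.range fun i : Fin n => D (Pi.single i 1) 0),
      ∀ s, ∃ c : ℂ, x (tmon s) = c • tmon s := by
    intro x hx
    induction hx using Submodule.span_induction with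
    | mem x hx =>
        obtain ⟨i, rfl⟩ := hx
        exact fun s => ⟨(s i : ℂ), hgen i s⟩
    | zero => exact fun s => ⟨0, by simp⟩
    | add x y hx hy ihx ihy =>
        intro s
        obtain ⟨c, hc⟩ := ihx s
        obtain ⟨d, hd⟩ := ihy s
        exact ⟨c + d, by simp [hc, hd, add_smul]⟩
    | smul a x hx ih =>
        intro s
        obtain ⟨c, hc⟩ := ih s
        exact ⟨a * c, by simp [hc, mul_smul]⟩
  -- 𝔥 is abelian
  have habel : ∀ x ∈ Submodule.span ℂ (Set.range fun i : Fin n => D (Pi.single i 1) 0),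
      ∀ y ∈ Submodule.span ℂ (Set.range fun i : Fin n => D (Pi.single i 1) 0),
      ⁅x, y⁆ = 0 := by
    intro x hx y hy
    refine derivation_ext_tmon fun s => ?_
    obtain ⟨c, hc⟩ := P x hx s
    obtain ⟨d, hd⟩ := P y hy s
    rw [Derivation.commutator_apply, hc, hd, Derivation.map_smul, Derivation.map_smul,
      hc, hd, smul_comm]
    simp
  refine ⟨habel, ?_⟩
  intro K hK hle
  refine le_antisymm (fun y hy => ?_) hle
  -- the generators lie in K and commute with y
  have hmem : ∀ i : Fin n, D (Pi.single i 1) 0 ∈ K :=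
    fun i => hle (Submodule.subset_span ⟨i, rfl⟩)
  have hcomm : ∀ i : Fin n, ⁅D (Pi.single i 1) 0, y⁆ = 0 :=
    fun i => hK _ (hmem i) y hy
  -- hence y (t^s) is a simultaneous eigenvector
  have heig : ∀ (s : Fin n → ℤ) (i : Fin n),
      D (Pi.single i 1) 0 (y (tmon s)) = (s i : ℂ) • (y (tmon s)) := by
    intro s i
    have h0 := congrArg (fun Z : Derivation ℂ (LaurentAlg n) (LaurentAlg n) => Z (tmon s))
      (hcomm i)
    simp only [Derivation.commutator_apply] at h0
    have h0' : D (Pi.single i 1) 0 (y (tmon s)) - y (D (Pi.single i 1) 0 (tmon s)) = 0 := by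
      simpa using h0
    rw [hgen i s, Derivation.map_smul, sub_eq_zero] at h0'
    exact h0'
  -- the eigenvalue function
  set c : (Fin n → ℤ) → ℂ := fun s => (y (tmon s)).coeff s with hc_def
  have hys : ∀ s, y (tmon s) = c s • tmon s := by
    intro s
    apply eigen
    intro i r
    have h1 : (D (Pi.single i 1) 0 (y (tmon s))).coeff r = (r i : ℂ) * (y (tmon s)).coeff r :=
      eval_coeff _ i (hgen i) _ r
    rw [heig s i] at h1
    rw [← h1, AddMonoidAlgebra.coeff_smul, Finsupp.smul_apply, smul_eq_mul]
  -- c is additive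
  have hadd : ∀ s t, c (s + t) = c s + c t := by
    intro s t
    have hmul : tmon (s + t) = tmon s * tmon t := by
      simp [tmon, AddMonoidAlgebra.single_mul_single]
    have hleib : y (tmon (s + t)) = tmon s * y (tmon t) + tmon t * y (tmon s) := by
      rw [hmul, Derivation.leibniz]
      simp [smul_eq_mul]
    rw [hys (s + t), hys s, hys t] at hleib
    have hcomb : (c (s + t)) • tmon (s + t) = (c s + c t) • tmon (s + t) := by
      rw [hleib]
      rw [mul_smul_comm, mul_smul_comm, ← hmul]
      rw [show tmon t * tmon s = tmon (s + t) by
        simp [tmon, AddMonoidAlgebra.single_mul_single, add_comm]]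
      rw [add_smul]
      ring_nf
    have h2 : (c (s + t) • tmon (s + t) : LaurentAlg n).coeff (s + t)
        = ((c s + c t) • tmon (s + t) : LaurentAlg n).coeff (s + t) := by rw [hcomb]
    simpa [tmon, Finsupp.smul_apply, Finsupp.single_apply] using h2
  -- c is determined by its values on the standard basis
  let g : (Fin n → ℤ) →+ ℂ := AddMonoidHom.mk' c hadd
  have hcs : ∀ s : Fin n → ℤ, c s = ∑ i, (s i : ℂ) * c (Pi.single i 1) := by
    intro s
    have hs : s = ∑ i, (s i) • Pi.single i (1 : ℤ) := by
      conv_lhs => rw [← Finset.univ_sum_single s]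
      refine Finset.sum_congr rfl fun i _ => ?_
      rw [← Pi.single_smul, smul_eq_mul, mul_one]
    calc c s = g s := rfl
      _ = g (∑ i, (s i) • Pi.single i (1 : ℤ)) := by rw [← hs]
      _ = ∑ i, (s i) • g (Pi.single i (1 : ℤ)) := by
          rw [map_sum]
          exact Finset.sum_congr rfl fun i _ => map_zsmul g _ _
      _ = ∑ i, (s i : ℂ) * c (Pi.single i 1) := by
          refine Finset.sum_congr rfl fun i _ => ?_
          rw [zsmul_eq_mul]
          rfl
  -- y equals an explicit element of 𝔥
  have hy_eq : y = ∑ i, c (Pi.single i 1) • D (Pi.single i 1) 0 := by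
    refine derivation_ext_tmon fun s => ?_
    rw [hys s, deriv_sum_apply]
    have : ∑ i, (c (Pi.single i 1) • D (Pi.single i 1) 0) (tmon s)
        = ∑ i, ((s i : ℂ) * c (Pi.single i 1)) • tmon s := by
      refine Finset.sum_congr rfl fun i _ => ?_
      simp [hgen i s, smul_smul, mul_comm]
    rw [this, ← Finset.sum_smul, ← hcs s]
  rw [hy_eq]
  exact Submodule.sum_mem _ fun i _ =>
    Submodule.smul_mem _ _ (Submodule.subset_span ⟨i, rfl⟩)
end

section
/- Let η : B → ℂ be a unital algebra homomorphism, V(μ,c) a finite-dimensional irreducible 𝔤𝔩ₙ-module, and F^α(μ,c) = V(μ,c) ⊗ A. Then the formulas D(u,r)b · (v ⊗ t^m) = η(b){(u, m+α) v ⊗ t^{m+r} + Σ_{i,j} uᵢ rⱼ (Eⱼᵢ v) ⊗ t^{m+r}} and t^r b · (v ⊗ t^m) = η(b) v ⊗ t^{m+r} define a module structure for the Lie algebra τ = (A ⋊ Der A) ⊗ B on F^α(μ,c). -/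
attribute [local instance 100] LieRing.ofAssociativeRing

open Matrix Finsupp

section aux
variable {n : ℕ} {V : Type*} [AddCommGroup V] [Module ℂ V]

noncomputable def Mx (r : Fin n → ℤ) (u : Fin n → ℂ) : Matrix (Fin n) (Fin n) ℂ :=
  Matrix.vecMulVec (fun a => (r a : ℂ)) u

lemma Mx_mul (r s : Fin n → ℤ) (u v : Fin n → ℂ) :
    Mx r u * Mx s v = (∑ i, u i * (s i : ℂ)) • Mx r v := by
  ext a b
  simp only [Mx, Matrix.mul_apply, Matrix.vecMulVec_apply, Matrix.smul_apply,
    Finset.sum_mul, smul_eq_mul]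
  exact Finset.sum_congr rfl fun c _ => by ring

lemma Mx_add (r s : Fin n → ℤ) (u : Fin n → ℂ) : Mx (r + s) u = Mx r u + Mx s u := by
  ext a b; simp [Mx, Matrix.vecMulVec_apply]; ring

lemma Mx_lin (r : Fin n → ℤ) (a b : ℂ) (u v : Fin n → ℂ) :
    Mx r (a • u - b • v) = a • Mx r u - b • Mx r v := by
  ext i j; simp [Mx, Matrix.vecMulVec_apply]; ring

lemma Mx_eq_sum (r : Fin n → ℤ) (u : Fin n → ℂ) :
    Mx r u = ∑ i, ∑ j, (u i * (r j : ℂ)) • Matrix.single j i 1 := by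
  ext a b
  simp only [Mx, Matrix.vecMulVec_apply, Matrix.sum_apply, Matrix.smul_apply,
    Matrix.single, Matrix.of_apply, smul_eq_mul, mul_ite, mul_one, mul_zero]
  rw [Finset.sum_comm]
  simp [ite_and, Finset.sum_ite_eq, mul_comm]

variable (π : Matrix (Fin n) (Fin n) ℂ →ₗ⁅ℂ⁆ Module.End ℂ V) (α : Fin n → ℂ)

noncomputable def cf (α : Fin n → ℂ) (u : Fin n → ℂ) (m : Fin n → ℤ) : ℂ :=
  ∑ i, u i * (α i + (m i : ℂ))

noncomputable def Psi (u : Fin n → ℂ) (r m : Fin n → ℤ) : Module.End ℂ V :=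
  cf α u m • 1 + π (Mx r u)

lemma cf_shift (u : Fin n → ℂ) (m s : Fin n → ℤ) :
    cf α u (m + s) = cf α u m + ∑ i, u i * (s i : ℂ) := by
  simp only [cf, ← Finset.sum_add_distrib]
  refine Finset.sum_congr rfl fun i _ => ?_
  simp only [Pi.add_apply, Int.cast_add]
  ring

lemma cf_lin (a b : ℂ) (u v : Fin n → ℂ) (m : Fin n → ℤ) :
    cf α (a • u - b • v) m = a * cf α u m - b * cf α v m := by
  simp only [cf, Finset.mul_sum, ← Finset.sum_sub_distrib]
  refine Finset.sum_congr rfl fun i _ => ?_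
  simp only [Pi.sub_apply, Pi.smul_apply, smul_eq_mul]
  ring

lemma pi_comm (u v : Fin n → ℂ) (r s : Fin n → ℤ) :
    π (Mx r u) * π (Mx s v) - π (Mx s v) * π (Mx r u)
      = (∑ i, u i * (s i : ℂ)) • π (Mx r v) - (∑ i, v i * (r i : ℂ)) • π (Mx s u) := by
  rw [← Ring.lie_def, ← π.map_lie, Ring.lie_def, Mx_mul, Mx_mul, map_sub,
    map_smul, map_smul]

lemma Psi_key (u v : Fin n → ℂ) (r s m : Fin n → ℤ) :
    Psi π α u r (m + s) * Psi π α v s m - Psi π α v s (m + r) * Psi π α u r m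
      = Psi π α ((∑ i, u i * (s i : ℂ)) • v - (∑ i, v i * (r i : ℂ)) • u) (r + s) m := by
  have h1 : π (Mx r u) * π (Mx s v) = π (Mx s v) * π (Mx r u)
      + ((∑ i, u i * (s i : ℂ)) • π (Mx r v) - (∑ i, v i * (r i : ℂ)) • π (Mx s u)) := by
    rw [← pi_comm π u v r s]; abel
  simp only [Psi, cf_shift, cf_lin, Mx_add, Mx_lin, map_add, map_smul,
    map_sub, add_mul, mul_add, smul_mul_assoc, mul_smul_comm, one_mul, mul_one,
    smul_smul, h1]
  module

lemma Psi_shift (u : Fin n → ℂ) (r m s : Fin n → ℤ) :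
    Psi π α u r (m + s) = Psi π α u r m + (∑ i, u i * (s i : ℂ)) • 1 := by
  simp only [Psi, cf_shift, add_smul]; abel

lemma Psi_apply (u : Fin n → ℂ) (r m : Fin n → ℤ) (v : V) :
    Psi π α u r m v = (∑ i, u i * (α i + (m i : ℂ))) • v
      + ∑ i, ∑ j, (u i * (r j : ℂ)) • π (Matrix.single j i 1) v := by
  have hπ : π (∑ i, ∑ j, (u i * (r j : ℂ)) • Matrix.single j i 1)
      = ∑ i, ∑ j, (u i * (r j : ℂ)) • π (Matrix.single j i 1) := by
    rw [← LieHom.coe_toLinearMap]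
    simp only [map_sum, LinearMap.map_smul]
  simp only [Psi, cf, Mx_eq_sum, hπ, LinearMap.add_apply, LinearMap.smul_apply,
    Module.End.one_apply, LinearMap.sum_apply]

end aux



/-- Let `η : B → ℂ` be a unital algebra homomorphism, `V = V(μ,c)` a
finite-dimensional irreducible `𝔤𝔩ₙ`-module (with action `π`), and `F^α(μ,c) = V ⊗ A`,
realized as finitely supported functions `ℤⁿ →₀ V` (with `v ⊗ t^m = single m v`).
Then the formulas
`D(u,r)b · (v ⊗ t^m) = η(b){(u, m+α) v ⊗ t^{m+r} + Σ_{i,j} uᵢ rⱼ (Eⱼᵢ v) ⊗ t^{m+r}}` and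
`t^r b · (v ⊗ t^m) = η(b) v ⊗ t^{m+r}`
define a module structure for `τ = (A ⋊ Der A) ⊗ B`: the resulting operators satisfy the
defining commutator relations of `τ`. -/
theorem tensor_field_module_structure (n : ℕ) (B : Type*) [CommRing B] [Algebra ℂ B]
    (η : B →ₐ[ℂ] ℂ)
    (V : Type*) [AddCommGroup V] [Module ℂ V] [FiniteDimensional ℂ V] [Nontrivial V]
    (π : Matrix (Fin n) (Fin n) ℂ →ₗ⁅ℂ⁆ Module.End ℂ V)
    (hirr : ∀ W : Submodule ℂ V, (∀ x : Matrix (Fin n) (Fin n) ℂ, ∀ v ∈ W, π x v ∈ W) →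
      W = ⊥ ∨ W = ⊤)
    (α : Fin n → ℂ)
    (Dop : (Fin n → ℂ) → (Fin n → ℤ) → B → Module.End ℂ ((Fin n → ℤ) →₀ V))
    (Top : (Fin n → ℤ) → B → Module.End ℂ ((Fin n → ℤ) →₀ V))
    (hDop : ∀ (u : Fin n → ℂ) (r : Fin n → ℤ) (b : B) (m : Fin n → ℤ) (v : V),
      Dop u r b (Finsupp.single m v) =
        η b • Finsupp.single (m + r)
          ((∑ i, u i * (α i + (m i : ℂ))) • v +
            ∑ i, ∑ j, (u i * (r j : ℂ)) • π (Matrix.single j i 1) v))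
    (hTop : ∀ (r : Fin n → ℤ) (b : B) (m : Fin n → ℤ) (v : V),
      Top r b (Finsupp.single m v) = η b • Finsupp.single (m + r) v) :
    (∀ (u v : Fin n → ℂ) (r s : Fin n → ℤ) (b b' : B),
      ⁅Dop u r b, Dop v s b'⁆ =
        Dop ((∑ i, u i * (s i : ℂ)) • v - (∑ i, v i * (r i : ℂ)) • u) (r + s) (b * b')) ∧
    (∀ (u : Fin n → ℂ) (r s : Fin n → ℤ) (b b' : B),
      ⁅Dop u r b, Top s b'⁆ = (∑ i, u i * (s i : ℂ)) • Top (r + s) (b * b')) ∧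
    (∀ (r s : Fin n → ℤ) (b b' : B), ⁅Top r b, Top s b'⁆ = 0) := by
  have hDop' : ∀ (u : Fin n → ℂ) (r : Fin n → ℤ) (b : B) (m : Fin n → ℤ) (v : V),
      Dop u r b (Finsupp.single m v) = η b • Finsupp.single (m + r) (Psi π α u r m v) := by
    intro u r b m v
    rw [hDop, Psi_apply]
  refine ⟨?_, ?_, ?_⟩
  · intro u v r s b b'
    refine Finsupp.lhom_ext fun m w => ?_
    rw [Ring.lie_def, LinearMap.sub_apply, Module.End.mul_apply, Module.End.mul_apply,
      hDop', LinearMap.map_smul, hDop', hDop', LinearMap.map_smul, hDop', hDop', map_mul η]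
    have hk := congrArg (fun f : Module.End ℂ V => f w) (Psi_key π α u v r s m)
    simp only [LinearMap.sub_apply, Module.End.mul_apply] at hk
    rw [show m + s + r = m + (r + s) from by ring, show m + r + s = m + (r + s) from by ring,
      smul_smul, smul_smul, mul_comm (η b') (η b), ← smul_sub, ← Finsupp.single_sub, hk]
  · intro u r s b b'
    refine Finsupp.lhom_ext fun m w => ?_
    rw [Ring.lie_def, LinearMap.sub_apply, Module.End.mul_apply, Module.End.mul_apply,
      hTop, LinearMap.map_smul, hDop', hDop', LinearMap.map_smul, hTop, LinearMap.smul_apply, hTop, map_mul η,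
      Psi_shift]
    simp only [LinearMap.add_apply, LinearMap.smul_apply, Module.End.one_apply]
    rw [show m + s + r = m + (r + s) from by ring, show m + r + s = m + (r + s) from by ring,
      smul_smul, smul_smul, mul_comm (η b') (η b), ← smul_sub, ← Finsupp.single_sub]
    rw [add_sub_cancel_left, smul_comm, Finsupp.smul_single]
    simp
  · intro r s b b'
    refine Finsupp.lhom_ext fun m w => ?_
    rw [Ring.lie_def, LinearMap.sub_apply, Module.End.mul_apply, Module.End.mul_apply,
      hTop, LinearMap.map_smul, hTop, hTop, LinearMap.map_smul, hTop]
    rw [show m + s + r = m + r + s from by ring, smul_smul, smul_smul, mul_comm (η b') (η b)]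
    simp
end

section
/- In the quotient U/L of the universal enveloping algebra of τ = (A ⋊ Der A) ⊗ B by the ideal L generated by t^r b · t^s b' − t^{r+s} bb' and t^0 ⊗ 1 − 1, the elements T(u,r,b₁,b₂) = t^{−r} b₁ · D(u,r) b₂ satisfy [T(u,r,b₁,b₂), T(v,s,b₃,b₄)] = T(w, r+s, b₁b₃, b₂b₄) − (u,s) T(v,s, b₁b₂b₃, b₄) + (v,r) T(u,r, b₁b₃b₄, b₂), where w = (u,s)v − (v,r)u. In particular their span D is a Lie algebra. -/
lemma aux_comm {R : Type*} [Ring R] [Algebra ℂ R] (a x b y p q : R) (c1 c2 : ℂ)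
    (hxb : x * b = b * x + c1 • p) (hya : y * a = a * y + c2 • q) (hcomm : a * b = b * a) :
    a * x * (b * y) - b * y * (a * x)
      = (a * b) * (x * y - y * x) + c1 • (a * (p * y)) - c2 • (b * (q * x)) := by
  have h1 : a * x * (b * y) = a * (x * b) * y := by noncomm_ring
  have h2 : b * y * (a * x) = b * (y * a) * x := by noncomm_ring
  have hcomm' : ∀ z, a * (b * z) = b * (a * z) := fun z => by
    rw [← mul_assoc, hcomm, mul_assoc]
  rw [h1, h2, hxb, hya, hcomm]
  simp only [mul_add, add_mul, mul_smul_comm, smul_mul_assoc, mul_sub, mul_assoc, hcomm']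
  abel

/-- In the quotient `U/L` of the universal enveloping algebra of
`τ = (A ⋊ Der A) ⊗ B` by the ideal `L` generated by `t^r b · t^s b' − t^{r+s} bb'` and
`t^0 ⊗ 1 − 1` (modeled here as an associative unital `ℂ`-algebra `R` generated by elements
`Tt r b` (the images of `t^r ⊗ b`) and `Dd u r b` (the images of `D(u,r) ⊗ b`) subject to
the commutation relations of `τ` and the relations of `L`), the elements
`T(u,r,b₁,b₂) = t^{−r} b₁ · D(u,r) b₂` satisfy
`[T(u,r,b₁,b₂), T(v,s,b₃,b₄)] = T(w, r+s, b₁b₃, b₂b₄) − (u,s) T(v,s, b₁b₂b₃, b₄)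
  + (v,r) T(u,r, b₁b₃b₄, b₂)` with `w = (u,s)v − (v,r)u`.
In particular their span `D` is closed under the commutator bracket, i.e. a Lie algebra. -/
theorem UmodL_T_bracket (n : ℕ) (B : Type*) [CommRing B] [Algebra ℂ B]
    (R : Type*) [Ring R] [Algebra ℂ R]
    (Tt : (Fin n → ℤ) → B → R) (Dd : (Fin n → ℂ) → (Fin n → ℤ) → B → R)
    (hTlin : ∀ r, IsLinearMap ℂ (Tt r)) (hDlin : ∀ u r, IsLinearMap ℂ (Dd u r))
    (hDadd : ∀ u u' r b, Dd (u + u') r b = Dd u r b + Dd u' r b)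
    (hDsmul : ∀ (c : ℂ) u r b, Dd (c • u) r b = c • Dd u r b)
    (hTT : ∀ (r s : Fin n → ℤ) (b b' : B), Tt r b * Tt s b' = Tt (r + s) (b * b'))
    (hT1 : Tt 0 1 = 1)
    (hDT : ∀ (u : Fin n → ℂ) (r s : Fin n → ℤ) (b b' : B),
      Dd u r b * Tt s b' - Tt s b' * Dd u r b = (∑ i, u i * (s i : ℂ)) • Tt (r + s) (b * b'))
    (hDD : ∀ (u v : Fin n → ℂ) (r s : Fin n → ℤ) (b b' : B),
      Dd u r b * Dd v s b' - Dd v s b' * Dd u r b =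
        Dd ((∑ i, u i * (s i : ℂ)) • v - (∑ i, v i * (r i : ℂ)) • u) (r + s) (b * b'))
    (T : (Fin n → ℂ) → (Fin n → ℤ) → B → B → R)
    (hT : ∀ u r b₁ b₂, T u r b₁ b₂ = Tt (-r) b₁ * Dd u r b₂) :
    (∀ (u v : Fin n → ℂ) (r s : Fin n → ℤ) (b₁ b₂ b₃ b₄ : B),
      T u r b₁ b₂ * T v s b₃ b₄ - T v s b₃ b₄ * T u r b₁ b₂ =
        T ((∑ i, u i * (s i : ℂ)) • v - (∑ i, v i * (r i : ℂ)) • u) (r + s) (b₁ * b₃) (b₂ * b₄)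
          - (∑ i, u i * (s i : ℂ)) • T v s (b₁ * b₂ * b₃) b₄
          + (∑ i, v i * (r i : ℂ)) • T u r (b₁ * b₃ * b₄) b₂) ∧
    (∀ x ∈ Submodule.span ℂ {z : R | ∃ u r b₁ b₂, z = T u r b₁ b₂},
     ∀ y ∈ Submodule.span ℂ {z : R | ∃ u r b₁ b₂, z = T u r b₁ b₂},
      x * y - y * x ∈ Submodule.span ℂ {z : R | ∃ u r b₁ b₂, z = T u r b₁ b₂}) := by
  have hneg : ∀ (u' : Fin n → ℂ) (s' : Fin n → ℤ),
      (∑ i, u' i * (((-s') i : ℤ) : ℂ)) = -(∑ i, u' i * ((s' i : ℤ) : ℂ)) := by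
    intro u' s'
    simp [mul_neg]
  have key : ∀ (u v : Fin n → ℂ) (r s : Fin n → ℤ) (b₁ b₂ b₃ b₄ : B),
      T u r b₁ b₂ * T v s b₃ b₄ - T v s b₃ b₄ * T u r b₁ b₂ =
        T ((∑ i, u i * (s i : ℂ)) • v - (∑ i, v i * (r i : ℂ)) • u) (r + s) (b₁ * b₃) (b₂ * b₄)
          - (∑ i, u i * (s i : ℂ)) • T v s (b₁ * b₂ * b₃) b₄
          + (∑ i, v i * (r i : ℂ)) • T u r (b₁ * b₃ * b₄) b₂ := by
    intro u v r s b₁ b₂ b₃ b₄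
    have h1 : Dd u r b₂ * Tt (-s) b₃
        = Tt (-s) b₃ * Dd u r b₂ + (-(∑ i, u i * (s i : ℂ))) • Tt (r + -s) (b₂ * b₃) := by
      have h := hDT u r (-s) b₂ b₃
      rw [hneg] at h
      exact sub_eq_iff_eq_add'.mp h
    have h2 : Dd v s b₄ * Tt (-r) b₁
        = Tt (-r) b₁ * Dd v s b₄ + (-(∑ i, v i * (r i : ℂ))) • Tt (s + -r) (b₄ * b₁) := by
      have h := hDT v s (-r) b₄ b₁
      rw [hneg] at h
      exact sub_eq_iff_eq_add'.mp h
    have hcomm : Tt (-r) b₁ * Tt (-s) b₃ = Tt (-s) b₃ * Tt (-r) b₁ := by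
      rw [hTT, hTT]
      congr 1
      · abel
      · ring
    rw [hT u r b₁ b₂, hT v s b₃ b₄, hT, hT, hT]
    rw [aux_comm _ _ _ _ _ _ _ _ h1 h2 hcomm]
    rw [hDD, hTT, ← mul_assoc (Tt (-r) b₁), hTT, ← mul_assoc (Tt (-s) b₃), hTT]
    have eI1 : (-r + -s : Fin n → ℤ) = -(r + s) := by ring
    have eI2 : (-r + (r + -s) : Fin n → ℤ) = -s := by ring
    have eI3 : (-s + (s + -r) : Fin n → ℤ) = -r := by ring
    have eB1 : b₁ * (b₂ * b₃) = b₁ * b₂ * b₃ := by ring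
    have eB2 : b₃ * (b₄ * b₁) = b₁ * b₃ * b₄ := by ring
    rw [eI1, eI2, eI3, eB1, eB2, neg_smul, neg_smul, sub_neg_eq_add]
    abel
  refine ⟨key, ?_⟩
  intro x hx y hy
  induction hx, hy using Submodule.span_induction₂ with
  | mem_mem a c ha hc =>
      obtain ⟨u, r, b₁, b₂, rfl⟩ := ha
      obtain ⟨v, s, b₃, b₄, rfl⟩ := hc
      rw [key]
      exact add_mem
        (sub_mem (Submodule.subset_span ⟨_, _, _, _, rfl⟩)
          (Submodule.smul_mem _ _ (Submodule.subset_span ⟨_, _, _, _, rfl⟩)))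
        (Submodule.smul_mem _ _ (Submodule.subset_span ⟨_, _, _, _, rfl⟩))
  | zero_left c hc => simp
  | zero_right a ha => simp
  | add_left a a' c ha ha' hc h h' =>
      have e : (a + a') * c - c * (a + a') = (a * c - c * a) + (a' * c - c * a') := by
        noncomm_ring
      rw [e]; exact add_mem h h'
  | add_right a c c' ha hc hc' h h' =>
      have e : a * (c + c') - (c + c') * a = (a * c - c * a) + (a * c' - c' * a) := by
        noncomm_ring
      rw [e]; exact add_mem h h'
  | smul_left t a c ha hc h =>
      have e : (t • a) * c - c * (t • a) = t • (a * c - c * a) := by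
        simp [smul_mul_assoc, mul_smul_comm, smul_sub]
      rw [e]; exact Submodule.smul_mem _ _ h
  | smul_right t a c ha hc h =>
      have e : a * (t • c) - (t • c) * a = t • (a * c - c * a) := by
        simp [smul_mul_assoc, mul_smul_comm, smul_sub]
      rw [e]; exact Submodule.smul_mem _ _ h
end

section
/- In the Lie algebra Der A ⊗ B, the elements I(u,r,b₁,b₂) = ψ(b₁) D(u,r) ⊗ b₂ − D(u,0) ⊗ b₁b₂, where ψ : B → ℂ is a unital algebra homomorphism, satisfy [I(u,r,b₁,b₂), I(v,s,b₃,b₄)] = I(w, r+s, b₁b₃, b₂b₄) − (u,s) I(v,s, b₃, b₁b₂b₄) + (v,r) I(u,r, b₁, b₂b₃b₄), where w = (u,s)v − (v,r)u; hence their span D₂ is a Lie subalgebra of Der A ⊗ B. -/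
open scoped TensorProduct

lemma ext_tmon {n : ℕ} {D₁ D₂ : Derivation ℂ (LaurentAlg n) (LaurentAlg n)}
    (h : ∀ s, D₁ (tmon s) = D₂ (tmon s)) : D₁ = D₂ := by
  apply Derivation.ext
  intro a
  induction a using AddMonoidAlgebra.induction_linear with
  | zero => simp
  | add f g hf hg => simp [map_add, hf, hg]
  | single a b =>
      have : (AddMonoidAlgebra.single a b : LaurentAlg n) = b • tmon a := by
        simp [tmon, AddMonoidAlgebra.smul_single']
      rw [this, Derivation.map_smul, Derivation.map_smul, h]

lemma sum_pi_sub {n : ℕ} (a b : ℂ) (u v : Fin n → ℂ) (t : Fin n → ℤ) :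
    (∑ i, (a • v - b • u) i * (t i : ℂ)) =
      a * (∑ i, v i * (t i : ℂ)) - b * (∑ i, u i * (t i : ℂ)) := by
  simp [Pi.sub_apply, Pi.smul_apply, smul_eq_mul, sub_mul, mul_assoc,
    Finset.sum_sub_distrib, Finset.mul_sum]

lemma sum_pi_add {n : ℕ} (u : Fin n → ℂ) (s t : Fin n → ℤ) :
    (∑ i, u i * ((s + t) i : ℂ)) = (∑ i, u i * (s i : ℂ)) + (∑ i, u i * (t i : ℂ)) := by
  simp [Pi.add_apply, mul_add, Finset.sum_add_distrib]

section
variable {n : ℕ} (D : (Fin n → ℂ) → (Fin n → ℤ) → Derivation ℂ (LaurentAlg n) (LaurentAlg n))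
  (hD : ∀ (u : Fin n → ℂ) (r s : Fin n → ℤ),
      D u r (tmon s) = (∑ i, u i * (s i : ℂ)) • tmon (r + s))

include hD

lemma Dbr (u v : Fin n → ℂ) (r s : Fin n → ℤ) :
    ⁅D u r, D v s⁆ =
      D ((∑ i, u i * (s i : ℂ)) • v - (∑ i, v i * (r i : ℂ)) • u) (r + s) := by
  apply ext_tmon
  intro t
  rw [Derivation.commutator_apply, hD, hD, Derivation.map_smul, Derivation.map_smul,
    hD, hD, hD, smul_smul, smul_smul]
  have h1 : r + (s + t) = r + s + t := by rw [add_assoc]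
  have h2 : s + (r + t) = r + s + t := by rw [← add_assoc, add_comm s r]
  rw [h1, h2, ← sub_smul]
  congr 1
  rw [sum_pi_sub, sum_pi_add, sum_pi_add]
  ring

lemma Dsub (a b : ℂ) (u v : Fin n → ℂ) (m : Fin n → ℤ) :
    D (a • v - b • u) m = a • D v m - b • D u m := by
  apply ext_tmon
  intro t
  simp only [hD, Derivation.sub_apply, Derivation.smul_apply, sum_pi_sub, smul_smul, ← sub_smul]

end


set_option maxHeartbeats 1600000 in
/-- In the loop algebra `Der A ⊗ B` (realized as `B ⊗[ℂ] Der A`, with bracket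
`[b ⊗ X, b' ⊗ Y] = bb' ⊗ [X,Y]`), the elements
`I(u,r,b₁,b₂) = ψ(b₁) D(u,r) ⊗ b₂ − D(u,0) ⊗ b₁b₂` satisfy
`[I(u,r,b₁,b₂), I(v,s,b₃,b₄)] = I(w, r+s, b₁b₃, b₂b₄) − (u,s) I(v,s, b₃, b₁b₂b₄)
  + (v,r) I(u,r, b₁, b₂b₃b₄)` with `w = (u,s)v − (v,r)u`; hence their span `D₂` is a Lie
subalgebra of `Der A ⊗ B`. -/
theorem loop_I_bracket (n : ℕ) (B : Type*) [CommRing B] [Algebra ℂ B] (ψ : B →ₐ[ℂ] ℂ)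
    (D : (Fin n → ℂ) → (Fin n → ℤ) → Derivation ℂ (LaurentAlg n) (LaurentAlg n))
    (hD : ∀ (u : Fin n → ℂ) (r s : Fin n → ℤ),
      D u r (tmon s) = (∑ i, u i * (s i : ℂ)) • tmon (r + s))
    (I : (Fin n → ℂ) → (Fin n → ℤ) → B → B →
      B ⊗[ℂ] Derivation ℂ (LaurentAlg n) (LaurentAlg n))
    (hI : ∀ u r b₁ b₂, I u r b₁ b₂ = ψ b₁ • (b₂ ⊗ₜ[ℂ] D u r) - (b₁ * b₂) ⊗ₜ[ℂ] D u 0) :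
    (∀ (u v : Fin n → ℂ) (r s : Fin n → ℤ) (b₁ b₂ b₃ b₄ : B),
      ⁅I u r b₁ b₂, I v s b₃ b₄⁆ =
        I ((∑ i, u i * (s i : ℂ)) • v - (∑ i, v i * (r i : ℂ)) • u) (r + s) (b₁ * b₃) (b₂ * b₄)
          - (∑ i, u i * (s i : ℂ)) • I v s b₃ (b₁ * b₂ * b₄)
          + (∑ i, v i * (r i : ℂ)) • I u r b₁ (b₂ * b₃ * b₄)) ∧
    (∀ x ∈ Submodule.span ℂ {z | ∃ u r b₁ b₂, z = I u r b₁ b₂},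
     ∀ y ∈ Submodule.span ℂ {z | ∃ u r b₁ b₂, z = I u r b₁ b₂},
      ⁅x, y⁆ ∈ Submodule.span ℂ {z | ∃ u r b₁ b₂, z = I u r b₁ b₂}) := by
  have key : ∀ (u v : Fin n → ℂ) (r s : Fin n → ℤ) (b₁ b₂ b₃ b₄ : B),
      ⁅I u r b₁ b₂, I v s b₃ b₄⁆ =
        I ((∑ i, u i * (s i : ℂ)) • v - (∑ i, v i * (r i : ℂ)) • u) (r + s) (b₁ * b₃) (b₂ * b₄)
          - (∑ i, u i * (s i : ℂ)) • I v s b₃ (b₁ * b₂ * b₄)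
          + (∑ i, v i * (r i : ℂ)) • I u r b₁ (b₂ * b₃ * b₄) := by
      intro u v r s b₁ b₂ b₃ b₄
      set α : ℂ := ∑ i, u i * (s i : ℂ) with hα
      set β : ℂ := ∑ i, v i * (r i : ℂ) with hβ
      have hbr1 : ⁅D u r, D v s⁆ = D (α • v - β • u) (r + s) := Dbr D hD u v r s
      have hbr2 : ⁅D u 0, D v s⁆ = α • D v s := by
        rw [Dbr D hD u v 0 s, Dsub D hD]; simp; rfl
      have hbr3 : ⁅D u r, D v 0⁆ = -(β • D u r) := by
        rw [Dbr D hD u v r 0, Dsub D hD]; simp; rfl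
      have hbr4 : ⁅D u 0, D v 0⁆ = 0 := by
        rw [Dbr D hD u v 0 0, Dsub D hD]; simp
      have hDsub0 : D (α • v - β • u) 0 = α • D v 0 - β • D u 0 := Dsub D hD α β u v 0
      have hsub : ∀ x y z : B ⊗[ℂ] Derivation ℂ (LaurentAlg n) (LaurentAlg n),
          ⁅x - y, z⁆ = ⁅x, z⁆ - ⁅y, z⁆ := fun x y z => sub_lie x y z
      have hsub' : ∀ x y z : B ⊗[ℂ] Derivation ℂ (LaurentAlg n) (LaurentAlg n),
          ⁅x, y - z⁆ = ⁅x, y⁆ - ⁅x, z⁆ := fun x y z => lie_sub x y z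
      rw [hI, hI, hI, hI, hI, hDsub0]
      simp only [← TensorProduct.tmul_smul]
      rw [hsub, hsub', hsub']
      simp only [LieAlgebra.ExtendScalars.bracket_tmul]
      simp only [smul_lie, lie_smul, hbr1, hbr2, hbr3, hbr4]
      simp only [map_mul, TensorProduct.tmul_zero, smul_zero, sub_zero,
        TensorProduct.tmul_neg, TensorProduct.tmul_smul, TensorProduct.tmul_sub, smul_sub, smul_smul, smul_neg, neg_smul]
      have e1 : b₂ * (b₃ * b₄) = b₂ * b₃ * b₄ := by ring
      have e2 : b₁ * b₂ * b₄ = b₁ * (b₂ * b₄) := by ring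
      have e3 : b₁ * b₃ * (b₂ * b₄) = b₁ * (b₂ * b₃ * b₄) := by ring
      have e4 : b₃ * (b₁ * b₂ * b₄) = b₁ * (b₂ * b₃ * b₄) := by ring
      have e5 : b₁ * b₂ * (b₃ * b₄) = b₁ * (b₂ * b₃ * b₄) := by ring
      rw [e1, e3, e4]
      try rw [e2]
      try rw [e5]
      module
  refine ⟨key, ?_⟩
  have hsubL : ∀ a b z : B ⊗[ℂ] Derivation ℂ (LaurentAlg n) (LaurentAlg n), ⁅a - b, z⁆ = ⁅a, z⁆ - ⁅b, z⁆ :=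
    fun a b z => sub_lie a b z
  have hsubR : ∀ z a b : B ⊗[ℂ] Derivation ℂ (LaurentAlg n) (LaurentAlg n), ⁅z, a - b⁆ = ⁅z, a⁆ - ⁅z, b⁆ :=
    fun z a b => lie_sub z a b
  have hz0 : ∀ x : B ⊗[ℂ] Derivation ℂ (LaurentAlg n) (LaurentAlg n), ⁅x, (0 : B ⊗[ℂ] Derivation ℂ (LaurentAlg n) (LaurentAlg n))⁆ = 0 := by
    intro x
    have h : ⁅x, x - x⁆ = 0 := by rw [hsubR, sub_self]
    simpa [sub_self] using h
  have h0z : ∀ x : B ⊗[ℂ] Derivation ℂ (LaurentAlg n) (LaurentAlg n), ⁅(0 : B ⊗[ℂ] Derivation ℂ (LaurentAlg n) (LaurentAlg n)), x⁆ = 0 := by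
    intro x
    have h : ⁅x - x, x⁆ = 0 := by rw [hsubL, sub_self]
    simpa [sub_self] using h
  have hxa : ∀ x a b : B ⊗[ℂ] Derivation ℂ (LaurentAlg n) (LaurentAlg n), ⁅x, a + b⁆ = ⁅x, a⁆ + ⁅x, b⁆ :=
    fun x a b => lie_add x a b
  have hax : ∀ a b x : B ⊗[ℂ] Derivation ℂ (LaurentAlg n) (LaurentAlg n), ⁅a + b, x⁆ = ⁅a, x⁆ + ⁅b, x⁆ :=
    fun a b x => add_lie a b x
  have hcs : ∀ (c : ℂ) (x y : B ⊗[ℂ] Derivation ℂ (LaurentAlg n) (LaurentAlg n)), ⁅c • x, y⁆ = c • ⁅x, y⁆ := by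
    intro c x y
    induction x using TensorProduct.induction_on with
    | zero => rw [smul_zero, h0z, smul_zero]
    | tmul a d =>
        induction y using TensorProduct.induction_on with
        | zero => rw [hz0, hz0, smul_zero]
        | tmul b e =>
            rw [TensorProduct.smul_tmul', LieAlgebra.ExtendScalars.bracket_tmul,
              LieAlgebra.ExtendScalars.bracket_tmul, smul_mul_assoc,
              TensorProduct.smul_tmul']
        | add y₁ y₂ hy₁ hy₂ => rw [hxa, hxa, hy₁, hy₂, smul_add]
    | add x₁ x₂ hx₁ hx₂ => rw [smul_add, hax, hax, hx₁, hx₂, smul_add]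
  have hcs' : ∀ (c : ℂ) (x y : B ⊗[ℂ] Derivation ℂ (LaurentAlg n) (LaurentAlg n)), ⁅x, c • y⁆ = c • ⁅x, y⁆ := by
    intro c x y
    induction y using TensorProduct.induction_on with
    | zero => rw [smul_zero, hz0, smul_zero]
    | tmul b e =>
        induction x using TensorProduct.induction_on with
        | zero => rw [h0z, h0z, smul_zero]
        | tmul a d =>
            rw [TensorProduct.smul_tmul', LieAlgebra.ExtendScalars.bracket_tmul,
              LieAlgebra.ExtendScalars.bracket_tmul, mul_smul_comm,
              TensorProduct.smul_tmul']
        | add x₁ x₂ hx₁ hx₂ => rw [hax, hax, hx₁, hx₂, smul_add]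
    | add y₁ y₂ hy₁ hy₂ => rw [smul_add, hxa, hxa, hy₁, hy₂, smul_add]
  intro x hx y hy
  induction hx using Submodule.span_induction with
  | mem z hz =>
      induction hy using Submodule.span_induction with
      | mem w hw =>
          obtain ⟨u, r, b₁, b₂, rfl⟩ := hz
          obtain ⟨v, s, b₃, b₄, rfl⟩ := hw
          rw [key]
          have m1 : I ((∑ i, u i * (s i : ℂ)) • v - (∑ i, v i * (r i : ℂ)) • u) (r + s)
              (b₁ * b₃) (b₂ * b₄) ∈ Submodule.span ℂ {z | ∃ u r b₁ b₂, z = I u r b₁ b₂} :=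
            Submodule.subset_span ⟨_, _, _, _, rfl⟩
          have m2 : I v s b₃ (b₁ * b₂ * b₄) ∈
              Submodule.span ℂ {z | ∃ u r b₁ b₂, z = I u r b₁ b₂} :=
            Submodule.subset_span ⟨_, _, _, _, rfl⟩
          have m3 : I u r b₁ (b₂ * b₃ * b₄) ∈
              Submodule.span ℂ {z | ∃ u r b₁ b₂, z = I u r b₁ b₂} :=
            Submodule.subset_span ⟨_, _, _, _, rfl⟩
          have m2' := Submodule.smul_mem (Submodule.span ℂ {z | ∃ u r b₁ b₂, z = I u r b₁ b₂}) (∑ i, u i * (s i : ℂ)) m2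
          have m3' := Submodule.smul_mem (Submodule.span ℂ {z | ∃ u r b₁ b₂, z = I u r b₁ b₂}) (∑ i, v i * (r i : ℂ)) m3
          have m12 := Submodule.sub_mem (M := B ⊗[ℂ] Derivation ℂ (LaurentAlg n) (LaurentAlg n)) (Submodule.span ℂ {z | ∃ u r b₁ b₂, z = I u r b₁ b₂}) m1 m2'
          exact Submodule.add_mem _ m12 m3'
      | zero => rw [hz0]; exact Submodule.zero_mem _
      | add a b _ _ ha hb => rw [hxa]; exact Submodule.add_mem _ ha hb
      | smul c a _ ha => rw [hcs']; exact Submodule.smul_mem _ _ ha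
  | zero => rw [h0z]; exact Submodule.zero_mem _
  | add a b _ _ ha hb => rw [hax]; exact Submodule.add_mem _ ha hb
  | smul c a _ ha => rw [hcs]; exact Submodule.smul_mem _ _ ha
end

section
/- Let ψ : B → ℂ be a unital algebra homomorphism with kernel M. Then the span D̃ of all elements ψ(b₁) D(u,r) ⊗ b₂ − D(u,r) ⊗ b₁b₂ (u ∈ ℂ^n, r ∈ ℤ^n, b₁,b₂ ∈ B) equals Der A ⊗ M, and is an ideal of the Lie algebra Der A ⊗ B. -/
open scoped TensorProduct

/-- Abstract version of the statement, for any Lie algebra `L` over `ℂ`. -/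
theorem loop_aux {B L : Type*} [CommRing B] [Algebra ℂ B] [LieRing L] [LieAlgebra ℂ L]
    (ψ : B →ₐ[ℂ] ℂ) (S : Set L) (hspan : Submodule.span ℂ S = ⊤)
    (Dtil : Submodule ℂ (B ⊗[ℂ] L))
    (hDtil : Dtil = Submodule.span ℂ
      {z | ∃ X ∈ S, ∃ b₁ b₂ : B, z = ψ b₁ • (b₂ ⊗ₜ[ℂ] X) - (b₁ * b₂) ⊗ₜ[ℂ] X}) :
    Dtil = Submodule.span ℂ
        {z | ∃ b ∈ RingHom.ker (ψ : B →+* ℂ), ∃ X : L, z = b ⊗ₜ[ℂ] X} ∧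
      ∀ x ∈ Dtil, ∀ y : B ⊗[ℂ] L, ⁅y, x⁆ ∈ Dtil := by
  have key : ∀ b ∈ RingHom.ker (ψ : B →+* ℂ), ∀ X : L, b ⊗ₜ[ℂ] X ∈ Dtil := by
    intro b hb X
    have hX : X ∈ Submodule.span ℂ S := by rw [hspan]; trivial
    induction hX using Submodule.span_induction with
    | mem X hX =>
      have hb0 : ψ b = 0 := hb
      have h : b ⊗ₜ[ℂ] X
          = -(ψ b • ((1 : B) ⊗ₜ[ℂ] X) - (b * 1) ⊗ₜ[ℂ] X) := by
        rw [hb0, zero_smul, zero_sub, neg_neg, mul_one]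
      rw [h, hDtil]
      exact (Submodule.span ℂ _).neg_mem (Submodule.subset_span ⟨X, hX, b, 1, rfl⟩)
    | zero => rw [TensorProduct.tmul_zero]; exact Dtil.zero_mem
    | add x y _ _ hx hy => rw [TensorProduct.tmul_add]; exact Dtil.add_mem hx hy
    | smul c x _ hx => rw [TensorProduct.tmul_smul]; exact Dtil.smul_mem c hx
  have heq : Dtil = Submodule.span ℂ
      {z | ∃ b ∈ RingHom.ker (ψ : B →+* ℂ), ∃ X : L, z = b ⊗ₜ[ℂ] X} := by
    apply le_antisymm
    · rw [hDtil]
      apply Submodule.span_le.2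
      rintro z ⟨X, hX, b₁, b₂, rfl⟩
      apply Submodule.subset_span
      refine ⟨ψ b₁ • b₂ - b₁ * b₂, ?_, X, ?_⟩
      · simp [RingHom.mem_ker, Algebra.smul_def]
      · rw [TensorProduct.sub_tmul, TensorProduct.smul_tmul']
    · apply Submodule.span_le.2
      rintro z ⟨b, hb, X, rfl⟩
      exact key b hb X
  refine ⟨heq, ?_⟩
  intro x hx y
  rw [heq] at hx ⊢
  induction hx using Submodule.span_induction with
  | mem x hxm =>
    obtain ⟨b, hb, X, rfl⟩ := hxm
    induction y using TensorProduct.induction_on with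
    | zero => rw [zero_lie]; exact Submodule.zero_mem _
    | tmul b₂ Y =>
      rw [LieAlgebra.ExtendScalars.bracket_tmul]
      refine Submodule.subset_span ⟨b₂ * b, ?_, ⁅Y, X⁆, rfl⟩
      simpa [RingHom.mem_ker] using mul_eq_zero_of_right (ψ b₂) hb
    | add y₁ y₂ h₁ h₂ => rw [add_lie]; exact add_mem h₁ h₂
  | zero => rw [lie_zero]; exact Submodule.zero_mem _
  | add x₁ x₂ _ _ h₁ h₂ => rw [lie_add]; exact add_mem h₁ h₂
  | smul c x _ h =>
    rw [← algebraMap_smul B c x, lie_smul, algebraMap_smul]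
    exact Submodule.smul_mem _ c h

/-- Let `ψ : B → ℂ` be a unital algebra homomorphism with kernel `M`. In the
loop algebra `Der A ⊗ B` (realized as `B ⊗[ℂ] Der A`), the span `Dtil` of the elements
`ψ(b₁) D(u,r) ⊗ b₂ − D(u,r) ⊗ b₁b₂` equals `Der A ⊗ M` (the span of the `m ⊗ X` with
`m ∈ M`, `X ∈ Der A`), and `Dtil` is an ideal of `Der A ⊗ B`.  (The elements `D(u,r)` span
`Der A`, which is recorded as the hypothesis `hspan`.) -/
theorem loop_Dtilde_eq_derA_tensor_M (n : ℕ) (B : Type*) [CommRing B] [Algebra ℂ B]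
    (ψ : B →ₐ[ℂ] ℂ)
    (D : (Fin n → ℂ) → (Fin n → ℤ) → Derivation ℂ (LaurentAlg n) (LaurentAlg n))
    (hD : ∀ (u : Fin n → ℂ) (r s : Fin n → ℤ),
      D u r (tmon s) = (∑ i, u i * (s i : ℂ)) • tmon (r + s))
    (hspan : Submodule.span ℂ {X | ∃ u r, X = D u r} = ⊤)
    (Dtil : Submodule ℂ (B ⊗[ℂ] Derivation ℂ (LaurentAlg n) (LaurentAlg n)))
    (hDtil : Dtil = Submodule.span ℂ
      {z | ∃ u r b₁ b₂, z = ψ b₁ • (b₂ ⊗ₜ[ℂ] D u r) - (b₁ * b₂) ⊗ₜ[ℂ] D u r}) :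
    Dtil = Submodule.span ℂ
        {z | ∃ b ∈ RingHom.ker (ψ : B →+* ℂ),
          ∃ X : Derivation ℂ (LaurentAlg n) (LaurentAlg n), z = b ⊗ₜ[ℂ] X} ∧
      ∀ x ∈ Dtil, ∀ y : B ⊗[ℂ] Derivation ℂ (LaurentAlg n) (LaurentAlg n), ⁅y, x⁆ ∈ Dtil := by
  have hset : {z : B ⊗[ℂ] Derivation ℂ (LaurentAlg n) (LaurentAlg n) |
      ∃ u r b₁ b₂, z = ψ b₁ • (b₂ ⊗ₜ[ℂ] D u r) - (b₁ * b₂) ⊗ₜ[ℂ] D u r}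
      = {z | ∃ X ∈ {X | ∃ u r, X = D u r}, ∃ b₁ b₂ : B,
          z = ψ b₁ • (b₂ ⊗ₜ[ℂ] X) - (b₁ * b₂) ⊗ₜ[ℂ] X} := by
    ext z
    constructor
    · rintro ⟨u, r, b₁, b₂, rfl⟩
      exact ⟨D u r, ⟨u, r, rfl⟩, b₁, b₂, rfl⟩
    · rintro ⟨X, ⟨u, r, rfl⟩, b₁, b₂, rfl⟩
      exact ⟨u, r, b₁, b₂, rfl⟩
  rw [hset] at hDtil
  exact loop_aux ψ _ hspan Dtil hDtil
end

section
/- In the semidirect product A ⋊ Der A with A = ℂ[t^{±1}], the elements (t−1)^k d_i (k ∈ ℕ, i ∈ ℤ, d_i = t^i·t d/dt) satisfy [(t−1)^k d_i, (t−1)^l d_j] = (l − k + j − i)(t−1)^{k+l} d_{i+j} + (l − k)(t−1)^{k+l−1} d_{i+j}. -/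
open LaurentPolynomial

private lemma smulC_aux (c : ℂ) (x : LaurentPolynomial ℂ) : c • x = C c * x := by
  rw [C_eq_algebraMap, ← Algebra.smul_def]

private lemma derivation_ext_T_aux
    (D1 D2 : Derivation ℂ (LaurentPolynomial ℂ) (LaurentPolynomial ℂ))
    (h : ∀ s : ℤ, D1 (T s) = D2 (T s)) : D1 = D2 := by
  have key : (D1 : LaurentPolynomial ℂ →ₗ[ℂ] LaurentPolynomial ℂ) = D2 := by
    apply LinearMap.ext
    intro p
    induction p using LaurentPolynomial.induction_on' with
    | add p q hp hq => simp only [map_add, hp, hq]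
    | C_mul_T n a =>
      rw [← smulC_aux]
      simp only [map_smul, Derivation.coeFn_coe, h n]
  exact Derivation.ext fun a => DFunLike.congr_fun key a

private lemma comp_aux (d : ℤ → Derivation ℂ (LaurentPolynomial ℂ) (LaurentPolynomial ℂ))
    (hd : ∀ m s : ℤ, d m (T s) = (s : ℂ) • T (m + s)) (k l : ℕ) (i j s : ℤ) :
    ((T 1 - 1 : LaurentPolynomial ℂ)^k • d i) (((T 1 - 1 : LaurentPolynomial ℂ)^l • d j) (T s)) =
      ((s:ℂ)*(l:ℂ)) • ((T 1 - 1:LaurentPolynomial ℂ)^(k+l) * T (i+j+s))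
      + ((s:ℂ)*(l:ℂ)) • ((T 1 - 1:LaurentPolynomial ℂ)^(k+l-1) * T (i+j+s))
      + ((s:ℂ)*((j:ℂ)+(s:ℂ))) • ((T 1 - 1:LaurentPolynomial ℂ)^(k+l) * T (i+j+s)) := by
  set p : LaurentPolynomial ℂ := T 1 - 1 with hp
  have hdp : ∀ m : ℤ, d m p = T (m+1) := by
    intro m; simp [hp, hd]
  have hT : T (j+s) * T (i+1) = T (i+j+s) * (p+1) := by
    rw [hp, sub_add_cancel, ← T_add, ← T_add]
    congr 1; ring
  have hT2 : (T (i + (j + s)) : LaurentPolynomial ℂ) = T (i+j+s) := by congr 1; ring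
  cases l with
  | zero =>
    simp only [Derivation.smul_apply, hd, Derivation.map_smul, Derivation.leibniz,
      Derivation.leibniz_pow, hdp, smul_eq_mul, hT2, Nat.cast_zero, pow_zero,
      zero_smul, mul_zero, zero_mul, smul_zero, add_zero, Nat.add_zero]
    simp only [smulC_aux, map_mul, map_add]
    push_cast
    simp only [map_add, Derivation.map_one_eq_zero, mul_zero, zero_mul]
    ring
  | succ l =>
    simp only [Derivation.smul_apply, hd, Derivation.map_smul, Derivation.leibniz,
      Derivation.leibniz_pow, hdp, smul_eq_mul, hT2, Nat.add_succ_sub_one, Nat.succ_sub_one,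
      ← Nat.cast_smul_eq_nsmul ℂ]
    simp only [smulC_aux, map_mul, map_add]
    push_cast
    simp only [map_add, Derivation.map_one_eq_zero, mul_zero, zero_mul]
    linear_combination (C (s:ℂ) * (C (l:ℂ) + C 1) * p^l * p^k) * hT

/-- In `Der ℂ[t^{±1}] ⊆ A ⋊ Der A`, the derivations `(t−1)^k d_i`
(`d_i = t^i · t d/dt`, `d_i(t^s) = s t^{i+s}`) satisfy
`[(t−1)^k d_i, (t−1)^l d_j] = (l − k + j − i)(t−1)^{k+l} d_{i+j}
  + (l − k)(t−1)^{k+l−1} d_{i+j}`. -/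
theorem one_var_tminus1_bracket
    (d : ℤ → Derivation ℂ (LaurentPolynomial ℂ) (LaurentPolynomial ℂ))
    (hd : ∀ m s : ℤ, d m (T s) = (s : ℂ) • T (m + s))
    (k l : ℕ) (i j : ℤ) :
    ⁅((T 1 - 1 : LaurentPolynomial ℂ)) ^ k • d i, ((T 1 - 1 : LaurentPolynomial ℂ)) ^ l • d j⁆ =
      (((l : ℂ) - (k : ℂ) + (j : ℂ) - (i : ℂ)) • (((T 1 - 1 : LaurentPolynomial ℂ)) ^ (k + l) • d (i + j)))
        + (((l : ℂ) - (k : ℂ)) • (((T 1 - 1 : LaurentPolynomial ℂ)) ^ (k + l - 1) • d (i + j))) := by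
  apply derivation_ext_T_aux
  intro s
  have hswap : ((T 1 - 1 : LaurentPolynomial ℂ)^l • d j)
      (((T 1 - 1 : LaurentPolynomial ℂ)^k • d i) (T s)) =
      ((s:ℂ)*(k:ℂ)) • ((T 1 - 1:LaurentPolynomial ℂ)^(k+l) * T (i+j+s))
      + ((s:ℂ)*(k:ℂ)) • ((T 1 - 1:LaurentPolynomial ℂ)^(k+l-1) * T (i+j+s))
      + ((s:ℂ)*((i:ℂ)+(s:ℂ))) • ((T 1 - 1:LaurentPolynomial ℂ)^(k+l) * T (i+j+s)) := by
    have := comp_aux d hd l k j i s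
    rw [show j + i + s = i + j + s by ring, Nat.add_comm l k] at this
    exact this
  rw [Derivation.commutator_apply, comp_aux d hd k l i j s, hswap,
    Derivation.add_apply, Derivation.smul_apply, Derivation.smul_apply,
    Derivation.smul_apply, Derivation.smul_apply, hd]
  rw [show i + j + s = i + (j + s) by ring] at *
  simp only [smulC_aux, smul_eq_mul, map_add, map_sub, map_mul]
  ring
end

section
/- Let V be a module for A ⋊ Der A (A = ℂ[t^{±1}]) on which A acts associatively. Then for every polynomial f ∈ ℂ[λ], every k ∈ ℕ and every v ∈ V, one has f((1 − t^{−1})d₀ − k) · (t−1)^{k+1} d_{−1} · v = (t−1)^{k+1} d_{−1} · f((1 − t^{−1})d₀) · v, where the operators act on V. -/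
open LaurentPolynomial

attribute [local instance 100] LieRing.ofAssociativeRing

/-- Two `ℂ`-derivations of `ℂ[t^{±1}]` agreeing at `T 1` are equal. -/
lemma poly_intertwine_deriv_ext (D1 D2 : Derivation ℂ (LaurentPolynomial ℂ) (LaurentPolynomial ℂ))
    (h1 : D1 (T 1) = D2 (T 1)) : D1 = D2 := by
  have h2 : D1 (T (-1)) = D2 (T (-1)) := by
    have key : ∀ D : Derivation ℂ (LaurentPolynomial ℂ) (LaurentPolynomial ℂ),
        T 1 * D (T (-1)) = - (T (-1) * D (T 1)) := by
      intro D
      have h0 : D (T 1 * T (-1)) = 0 := by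
        rw [← T_add]
        norm_num [T_zero, Derivation.map_one_eq_zero]
      rw [Derivation.leibniz, smul_eq_mul, smul_eq_mul] at h0
      linear_combination h0
    have := (key D1).trans (by rw [h1, ← key D2])
    exact mul_left_cancel₀ (isUnit_T 1).ne_zero this
  have key : ∀ n : ℤ, D1 (T n) = D2 (T n) := by
    intro n
    induction n using Int.induction_on with
    | zero => simp [T_zero]
    | succ m ih =>
        have : (T (m + 1) : LaurentPolynomial ℂ) = T m * T 1 := by rw [← T_add]
        rw [this, Derivation.leibniz, Derivation.leibniz, ih, h1]
    | pred m ih =>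
        have : (T (-m - 1) : LaurentPolynomial ℂ) = T (-m) * T (-1) := by
          rw [← T_add]; ring_nf
        rw [this, Derivation.leibniz, Derivation.leibniz, ih, h2]
  refine Derivation.ext fun p => ?_
  induction p using LaurentPolynomial.induction_on' with
  | add p q hp hq => simp [hp, hq]
  | C_mul_T n a =>
      have hC : (C a : LaurentPolynomial ℂ) * T n = a • T n := by
        rw [Algebra.smul_def]; rfl
      rw [hC, Derivation.map_smul, Derivation.map_smul, key]

/-- The key derivation bracket identity. -/
lemma poly_intertwine_bracket (d : ℤ → Derivation ℂ (LaurentPolynomial ℂ) (LaurentPolynomial ℂ))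
    (hd : ∀ m s : ℤ, d m (T s) = (s : ℂ) • T (m + s)) (k : ℕ) :
    ⁅((1 - T (-1) : LaurentPolynomial ℂ) • d 0),
      (((T 1 - 1 : LaurentPolynomial ℂ)) ^ (k + 1) • d (-1))⁆ =
    (k : ℂ) • (((T 1 - 1 : LaurentPolynomial ℂ)) ^ (k + 1) • d (-1)) := by
  set b : LaurentPolynomial ℂ := T 1 - 1 with hb
  have hd01 : d 0 (T 1) = T 1 := by rw [hd]; norm_num
  have hdm11 : d (-1) (T 1) = 1 := by rw [hd]; norm_num [T_zero]
  have hd0b : d 0 b = T 1 := by rw [hb, map_sub, hd01, Derivation.map_one_eq_zero, sub_zero]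
  have hdm1b : d (-1) b = 1 := by
    rw [hb, map_sub, hdm11, Derivation.map_one_eq_zero, sub_zero]
  have hd0bk : d 0 (b ^ (k + 1)) = (k + 1 : ℂ) • (b ^ k * T 1) := by
    rw [Derivation.leibniz_pow, hd0b]
    simp [smul_smul, Nat.add_sub_cancel, smul_eq_mul, ← Nat.cast_smul_eq_nsmul ℂ]
  have h1m : (1 - T (-1) : LaurentPolynomial ℂ) * T 1 = b := by
    rw [sub_mul, one_mul, ← T_add, hb]
    norm_num [T_zero]
  have hmul : (1 - T (-1) : LaurentPolynomial ℂ) * (b ^ k * T 1) = b ^ (k + 1) := by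
    calc (1 - T (-1) : LaurentPolynomial ℂ) * (b ^ k * T 1)
        = ((1 - T (-1)) * T 1) * b ^ k := by ring
      _ = b ^ (k + 1) := by rw [h1m, pow_succ, mul_comm]
  apply poly_intertwine_deriv_ext
  simp only [Derivation.commutator_apply, Derivation.smul_apply, hd01, hdm11, smul_eq_mul,
    mul_one, h1m, hd0bk, hdm1b]
  rw [mul_smul_comm, hmul, add_smul, one_smul, add_sub_cancel_right]

/-- If `a * c = c * b` then `f(a) * c = c * f(b)` for any polynomial `f`. -/
lemma poly_intertwine_aeval_comm {S : Type*} [Ring S] [Algebra ℂ S] (a b c : S)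
    (h : a * c = c * b) (f : Polynomial ℂ) :
    Polynomial.aeval a f * c = c * Polynomial.aeval b f := by
  induction f using Polynomial.induction_on' with
  | add p q hp hq => simp [add_mul, mul_add, hp, hq]
  | monomial n r =>
      have hpow : a ^ n * c = c * b ^ n := by
        induction n with
        | zero => simp
        | succ m ih => rw [pow_succ, pow_succ, mul_assoc, h, ← mul_assoc, ih, mul_assoc]
      rw [Polynomial.aeval_monomial, Polynomial.aeval_monomial, mul_assoc, hpow,
        ← mul_assoc, Algebra.commutes, mul_assoc]

/-- Let `V` be a module for `A ⋊ Der A` (`A = ℂ[t^{±1}]`), given by a Lie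
algebra homomorphism `π : Der A → End(V)` and an associative (unital) action
`σ : A → End(V)` satisfying the semidirect-product compatibility
`[π(D), σ(a)] = σ(D a)`.  Then for every polynomial `f ∈ ℂ[λ]`, every `k ∈ ℕ` and every
`v ∈ V`:
`f((1 − t^{−1})d₀ − k) · (t−1)^{k+1} d_{−1} · v
  = (t−1)^{k+1} d_{−1} · f((1 − t^{−1})d₀) · v`. -/
theorem poly_intertwine
    (V : Type*) [AddCommGroup V] [Module ℂ V]
    (π : Derivation ℂ (LaurentPolynomial ℂ) (LaurentPolynomial ℂ) →ₗ⁅ℂ⁆ Module.End ℂ V)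
    (σ : LaurentPolynomial ℂ →ₐ[ℂ] Module.End ℂ V)
    (hcompat : ∀ (D : Derivation ℂ (LaurentPolynomial ℂ) (LaurentPolynomial ℂ))
      (a : LaurentPolynomial ℂ), π D * σ a - σ a * π D = σ (D a))
    (d : ℤ → Derivation ℂ (LaurentPolynomial ℂ) (LaurentPolynomial ℂ))
    (hd : ∀ m s : ℤ, d m (T s) = (s : ℂ) • T (m + s))
    (f : Polynomial ℂ) (k : ℕ) (v : V) :
    Polynomial.aeval (π ((1 - T (-1) : LaurentPolynomial ℂ) • d 0) - (k : ℂ) • 1) f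
        (π (((T 1 - 1 : LaurentPolynomial ℂ)) ^ (k + 1) • d (-1)) v) =
      π (((T 1 - 1 : LaurentPolynomial ℂ)) ^ (k + 1) • d (-1))
        (Polynomial.aeval (π ((1 - T (-1) : LaurentPolynomial ℂ) • d 0)) f v) := by
  set X : Module.End ℂ V := π ((1 - T (-1) : LaurentPolynomial ℂ) • d 0)
  set Y : Module.End ℂ V := π (((T 1 - 1 : LaurentPolynomial ℂ)) ^ (k + 1) • d (-1))
  have hbr : X * Y - Y * X = (k : ℂ) • Y := by
    have := congrArg π (poly_intertwine_bracket d hd k)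
    rw [map_smul, LieHom.map_lie, Ring.lie_def] at this
    exact this
  have hcomm : (X - (k : ℂ) • 1) * Y = Y * X := by
    rw [sub_mul, smul_mul_assoc, one_mul]
    have : X * Y = Y * X + (k : ℂ) • Y := by rw [← hbr]; abel
    rw [this]; abel
  have := poly_intertwine_aeval_comm (X - (k : ℂ) • 1) X Y hcomm f
  exact congrFun (congrArg DFunLike.coe this) v
end

section
/- In A ⋊ Der A with A = ℂ[t^{±1}], for all i ∈ ℤ and l ∈ ℕ the identity [(t−1)^{l+2} d_{−1}, (t−1) d_i] − [(t−1)^{l+1} d_{−1}, (t−1)² d_i] = −2 (t−1)^{l+2} d_i holds. -/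
open LaurentPolynomial

private lemma smul_bracket_smul {R A : Type*} [CommRing R] [CommRing A] [Algebra R A]
    (f g : A) (D E : Derivation R A A) :
    ⁅f • D, g • E⁆ = (f * g) • ⁅D, E⁆ + (f * D g) • E - (g * E f) • D := by
  ext a
  simp only [Derivation.commutator_apply, Derivation.smul_apply, Derivation.add_apply,
    Derivation.sub_apply, map_smul, smul_eq_mul, Derivation.leibniz]
  ring

private lemma derivation_ext_T {D E : Derivation ℂ (LaurentPolynomial ℂ) (LaurentPolynomial ℂ)}
    (h : ∀ n : ℤ, D (T n) = E (T n)) : D = E := by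
  apply Derivation.ext
  intro p
  induction p using LaurentPolynomial.induction_on' with
  | add p q hp hq => simp [hp, hq]
  | C_mul_T n a =>
      have h1 : (C a : LaurentPolynomial ℂ) * T n = a • T n := by
        rw [C_eq_algebraMap, Algebra.smul_def]
      rw [h1, Derivation.map_smul, Derivation.map_smul, h]

/-- In `A ⋊ Der A` with `A = ℂ[t^{±1}]` (the computation takes place in
`Der A`), for all `i ∈ ℤ` and `l ∈ ℕ`:
`[(t−1)^{l+2} d_{−1}, (t−1) d_i] − [(t−1)^{l+1} d_{−1}, (t−1)² d_i] = −2 (t−1)^{l+2} d_i`. -/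
theorem one_var_special_bracket_identity
    (d : ℤ → Derivation ℂ (LaurentPolynomial ℂ) (LaurentPolynomial ℂ))
    (hd : ∀ m s : ℤ, d m (T s) = (s : ℂ) • T (m + s))
    (i : ℤ) (l : ℕ) :
    ⁅((T 1 - 1 : LaurentPolynomial ℂ)) ^ (l + 2) • d (-1),
        ((T 1 - 1 : LaurentPolynomial ℂ)) • d i⁆ -
      ⁅((T 1 - 1 : LaurentPolynomial ℂ)) ^ (l + 1) • d (-1),
        ((T 1 - 1 : LaurentPolynomial ℂ)) ^ 2 • d i⁆ =
      (-2 : ℂ) • (((T 1 - 1 : LaurentPolynomial ℂ)) ^ (l + 2) • d i) := by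
  set u : LaurentPolynomial ℂ := T 1 - 1 with hu
  have hDu : d (-1) u = 1 := by
    simp [hu, hd (-1) 1]
  have hEu : d i u = T (i + 1) := by
    simp [hu, hd i 1, add_comm]
  have hdi : (T (i + 1) : LaurentPolynomial ℂ) • d (-1) = d i := by
    apply derivation_ext_T
    intro n
    rw [Derivation.smul_apply, hd, hd, smul_comm, smul_eq_mul, ← T_add,
      show i + 1 + (-1 + n) = i + n by ring]
  have hpow : ∀ (k : ℕ) (D : Derivation ℂ (LaurentPolynomial ℂ) (LaurentPolynomial ℂ)),
      D (u ^ (k + 1)) = ((k + 1 : ℕ) : LaurentPolynomial ℂ) * u ^ k * D u := by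
    intro k D
    rw [Derivation.leibniz_pow]
    simp [Nat.add_sub_cancel, smul_smul, nsmul_eq_mul]
    ring
  have h2 : d (-1) (u ^ 2) = 2 * u := by
    rw [pow_two, Derivation.leibniz, hDu]
    simp only [smul_eq_mul]
    ring
  rw [show l + 2 = (l + 1) + 1 from rfl]
  rw [smul_bracket_smul, smul_bracket_smul, hDu, h2, hpow (l + 1) (d i), hpow l (d i), hEu]
  rw [show (u ^ (l+1+1) * u) = u ^ (l+1) * u ^ 2 by ring, ← hdi]
  match_scalars <;> push_cast [map_ofNat] <;> ring
end

section
/- Let V be a representation of A ⋊ Der A (A = ℂ[t^{±1}]) with associative A-action, and W = span{t^r v − v : v ∈ V, r ∈ ℤ}. Then W is invariant under the subalgebra T' = span{(t^r − 1)d : r ∈ ℤ}, so V/W is a T'-module. -/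
open LaurentPolynomial

attribute [local instance 100] LieRing.ofAssociativeRing

/-- Let `V` be a representation of `A ⋊ Der A` (`A = ℂ[t^{±1}]`), given by a
Lie algebra homomorphism `π : Der A → End(V)` and an associative unital action
`σ : A → End(V)` with the semidirect-product compatibility `[π(D), σ(a)] = σ(D a)`.
Let `W = span{t^r v − v : v ∈ V, r ∈ ℤ}`.  Then `W` is invariant under the subalgebra
`T' = span{(t^r − 1)d : r ∈ ℤ}` (where `d(t^s) = s t^s`), so `V/W` is a `T'`-module. -/
theorem W_invariant_under_T'
    (V : Type*) [AddCommGroup V] [Module ℂ V]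
    (π : Derivation ℂ (LaurentPolynomial ℂ) (LaurentPolynomial ℂ) →ₗ⁅ℂ⁆ Module.End ℂ V)
    (σ : LaurentPolynomial ℂ →ₐ[ℂ] Module.End ℂ V)
    (hcompat : ∀ (D : Derivation ℂ (LaurentPolynomial ℂ) (LaurentPolynomial ℂ))
      (a : LaurentPolynomial ℂ), π D * σ a - σ a * π D = σ (D a))
    (d0 : Derivation ℂ (LaurentPolynomial ℂ) (LaurentPolynomial ℂ))
    (hd0 : ∀ s : ℤ, d0 (T s) = (s : ℂ) • T s)
    (W : Submodule ℂ V)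
    (hW : W = Submodule.span ℂ {w | ∃ (v : V) (r : ℤ), w = σ (T r) v - v}) :
    ∀ r : ℤ, ∀ w ∈ W, π ((T r - 1 : LaurentPolynomial ℂ) • d0) w ∈ W := by
  intro r w hw
  set D : Derivation ℂ (LaurentPolynomial ℂ) (LaurentPolynomial ℂ) :=
    (T r - 1 : LaurentPolynomial ℂ) • d0 with hDdef
  subst hW
  have hmem : ∀ (v : V) (s : ℤ),
      σ (T s) v - v ∈ Submodule.span ℂ {w | ∃ (v : V) (r : ℤ), w = σ (T r) v - v} :=
    fun v s => Submodule.subset_span ⟨v, s, rfl⟩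
  have key : ∀ (v : V) (s : ℤ), π D (σ (T s) v) = σ (D (T s)) v + σ (T s) (π D v) := by
    intro v s
    have h := LinearMap.congr_fun (hcompat D (T s)) v
    simp only [LinearMap.sub_apply, Module.End.mul_apply] at h
    exact sub_eq_iff_eq_add.mp h
  have hDT : ∀ s : ℤ, D (T s) = (s : ℂ) • (T (r + s) - T s) := by
    intro s
    have h1 : D (T s) = (T r - 1) * d0 (T s) := rfl
    rw [h1, hd0, mul_smul_comm, sub_mul, one_mul, ← T_add]
  induction hw using Submodule.span_induction with
  | mem x hx =>
    obtain ⟨v, s, rfl⟩ := hx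
    have e1 : π D (σ (T s) v - v)
        = (σ (T s) (π D v) - π D v) + σ (D (T s)) v := by
      rw [map_sub, key v s]; abel
    have e2 : σ (D (T s)) v
        = (s : ℂ) • ((σ (T (r + s)) v - v) - (σ (T s) v - v)) := by
      rw [hDT s]
      simp only [map_smul, map_sub, LinearMap.smul_apply, LinearMap.sub_apply]
      module
    rw [e1, e2]
    exact Submodule.add_mem _ (hmem _ s)
      (Submodule.smul_mem _ _ (Submodule.sub_mem _ (hmem v (r + s)) (hmem v s)))
  | zero => simp
  | add x y _ _ hx hy => rw [map_add]; exact Submodule.add_mem _ hx hy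
  | smul c x _ hx => rw [map_smul]; exact Submodule.smul_mem _ _ hx
end
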